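/- Let α, β be real numbers, let u ∈ ℋ, and define on the interior indices 𝓘: v := −α D₁,₀ u − β D₂,₀ u and w := −(α²/2) Δ₁ u − (β²/2) Δ₂ u − αβ D₁,₀ D₂,₀ u + ((α²+β²)/8) Δ₁ Δ₂ u. Then ‖v‖²_{ℓ²(𝓘)} − 2⟨u ; w⟩_{ℓ²(𝓘)} = −(α²/4)‖Δ₁ u‖²_{ℓ²(𝓘)} − (β²/4)‖Δ₂ u‖²_{ℓ²(𝓘)} − ((α²+β²)/4)‖D₁₊ D₂₊ u‖²_{ℓ²(𝓘)}. -/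

import Mathlib

noncomputable section

/-- Forward difference in the first variable. -/
def D1p (u : ℤ → ℤ → ℝ) : ℤ → ℤ → ℝ := fun j k => u (j + 1) k - u j k
/-- Backward difference in the first variable. -/
def D1m (u : ℤ → ℤ → ℝ) : ℤ → ℤ → ℝ := fun j k => u j k - u (j - 1) k
/-- Forward difference in the second variable. -/
def D2p (u : ℤ → ℤ → ℝ) : ℤ → ℤ → ℝ := fun j k => u j (k + 1) - u j k
/-- Backward difference in the second variable. -/
def D2m (u : ℤ → ℤ → ℝ) : ℤ → ℤ → ℝ := fun j k => u j k - u j (k - 1)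
/-- Centered difference in the first variable. -/
def D10 (u : ℤ → ℤ → ℝ) : ℤ → ℤ → ℝ := fun j k => (D1p u j k + D1m u j k) / 2
/-- Centered difference in the second variable. -/
def D20 (u : ℤ → ℤ → ℝ) : ℤ → ℤ → ℝ := fun j k => (D2p u j k + D2m u j k) / 2
/-- Discrete Laplacian in the first variable. -/
def L1 (u : ℤ → ℤ → ℝ) : ℤ → ℤ → ℝ := D1p (D1m u)
/-- Discrete Laplacian in the second variable. -/
def L2 (u : ℤ → ℤ → ℝ) : ℤ → ℤ → ℝ := D2p (D2m u)

/-- Squared ℓ²(ℤ²) norm. -/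
def sqZ (u : ℤ → ℤ → ℝ) : ℝ := ∑' p : ℤ × ℤ, (u p.1 p.2) ^ 2
/-- ℓ²(ℤ²) scalar product. -/
def ipZ (u v : ℤ → ℤ → ℝ) : ℝ := ∑' p : ℤ × ℤ, u p.1 p.2 * v p.1 p.2

/-- Squared ℓ²(𝓘) norm over the interior indices 𝓘 = ℕ × ℤ of the half-space grid. -/
def sqH (u : ℤ → ℤ → ℝ) : ℝ := ∑' p : ℕ × ℤ, (u (p.1 : ℤ) p.2) ^ 2
/-- ℓ²(𝓘) scalar product over the interior indices 𝓘 = ℕ × ℤ. -/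
def ipH (u v : ℤ → ℤ → ℝ) : ℝ := ∑' p : ℕ × ℤ, u (p.1 : ℤ) p.2 * v (p.1 : ℤ) p.2
/-- Membership in ℋ : square-summable on the half-space grid and satisfying the
extrapolation (Neumann) boundary condition `u (-1) k = u 0 k`. -/
def memH (u : ℤ → ℤ → ℝ) : Prop :=
  (∀ k : ℤ, u (-1) k = u 0 k) ∧ Summable (fun p : ℕ × ℤ => (u (p.1 : ℤ) p.2) ^ 2)

/-- Squared ℓ²(𝔦) norm over the interior indices 𝔦 = ℕ × ℕ of the quarter-space grid. -/
def sqQ (u : ℤ → ℤ → ℝ) : ℝ := ∑' p : ℕ × ℕ, (u (p.1 : ℤ) (p.2 : ℤ)) ^ 2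
/-- ℓ²(𝔦) scalar product over the interior indices 𝔦 = ℕ × ℕ. -/
def ipQ (u v : ℤ → ℤ → ℝ) : ℝ :=
  ∑' p : ℕ × ℕ, u (p.1 : ℤ) (p.2 : ℤ) * v (p.1 : ℤ) (p.2 : ℤ)
/-- Membership in 𝔥 : square-summable on the quarter-space grid, satisfying the
extrapolation boundary conditions on both sides and the corner condition. -/
def memQ (u : ℤ → ℤ → ℝ) : Prop :=
  (∀ k : ℤ, -1 ≤ k → u (-1) k = u 0 k) ∧ (∀ j : ℤ, 0 ≤ j → u j (-1) = u j 0) ∧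
    Summable (fun p : ℕ × ℕ => (u (p.1 : ℤ) (p.2 : ℤ)) ^ 2)

/-- The skew-selfadjoint part `v` in the decomposition of the Lax-Wendroff scheme. -/
def vop (α β : ℝ) (u : ℤ → ℤ → ℝ) : ℤ → ℤ → ℝ :=
  fun j k => -α * D10 u j k - β * D20 u j k
/-- The selfadjoint part `w` in the decomposition of the Lax-Wendroff scheme. -/
def wop (α β : ℝ) (u : ℤ → ℤ → ℝ) : ℤ → ℤ → ℝ :=
  fun j k => -(α ^ 2 / 2) * L1 u j k - (β ^ 2 / 2) * L2 u j k
    - α * β * D10 (D20 u) j k + ((α ^ 2 + β ^ 2) / 8) * L1 (L2 u) j k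


namespace LaxAux6

/-- The basic quadratic quantity over the half grid. -/
def PP (u : ℤ → ℤ → ℝ) (a b c d : ℤ) : ℝ :=
  ∑' p : ℕ × ℤ, u ((p.1 : ℤ) + a) (p.2 + b) * u ((p.1 : ℤ) + c) (p.2 + d)

/-- Row quantity at fixed first indices. -/
def RR (u : ℤ → ℤ → ℝ) (a c e : ℤ) : ℝ := ∑' k : ℤ, u a k * u c (k + e)

lemma tsum_shift2 (F : ℕ × ℤ → ℝ) (m : ℤ) :
    ∑' p : ℕ × ℤ, F (p.1, p.2 + m) = ∑' p : ℕ × ℤ, F p := by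
  have h := Equiv.tsum_eq ((Equiv.refl ℕ).prodCongr (Equiv.addRight m)) F
  simpa [Equiv.prodCongr, Prod.map_apply'] using h

lemma summable_shift2 {F : ℕ × ℤ → ℝ} (h : Summable F) (m : ℤ) :
    Summable fun p : ℕ × ℤ => F (p.1, p.2 + m) := by
  have hinj : Function.Injective (fun p : ℕ × ℤ => ((p.1, p.2 + m) : ℕ × ℤ)) := by
    intro p q hpq
    simp only [Prod.mk.injEq] at hpq
    exact Prod.ext hpq.1 (by omega)
  exact h.comp_injective hinj

lemma summable_up {F : ℕ × ℤ → ℝ} (h : Summable F) :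
    Summable fun p : ℕ × ℤ => F (p.1 + 1, p.2) := by
  have hinj : Function.Injective (fun p : ℕ × ℤ => ((p.1 + 1, p.2) : ℕ × ℤ)) := by
    intro p q hpq
    simp only [Prod.mk.injEq] at hpq
    exact Prod.ext (by omega) hpq.2
  exact h.comp_injective hinj

lemma tsum_split {F : ℕ × ℤ → ℝ} (h : Summable F) :
    ∑' p : ℕ × ℤ, F p = (∑' k : ℤ, F (0, k)) + ∑' p : ℕ × ℤ, F (p.1 + 1, p.2) := by
  have hrow : ∀ j : ℕ, Summable fun k : ℤ => F (j, k) := fun j => h.prod_factor j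
  have hg : HasSum (fun j : ℕ => ∑' k : ℤ, F (j, k)) (∑' p : ℕ × ℤ, F p) :=
    h.hasSum.prod_fiberwise fun j => (hrow j).hasSum
  rw [← hg.tsum_eq, hg.summable.tsum_eq_zero_add]
  congr 1
  exact ((summable_up h).tsum_prod' fun j => hrow (j + 1)).symm

section WithU

variable {u : ℤ → ℤ → ℝ}

lemma sumsq (hbc : ∀ k : ℤ, u (-1) k = u 0 k)
    (hs : Summable fun p : ℕ × ℤ => (u (p.1 : ℤ) p.2) ^ 2)
    (a b : ℤ) (ha : -1 ≤ a) (ha' : a ≤ 1) :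
    Summable fun p : ℕ × ℤ => (u ((p.1 : ℤ) + a) (p.2 + b)) ^ 2 := by
  have key : Summable fun p : ℕ × ℤ => (u ((p.1 : ℤ) + a) p.2) ^ 2 := by
    interval_cases a
    · -- a = -1
      have heq : (fun p : ℕ × ℤ => (u ((p.1 : ℤ) + (-1)) p.2) ^ 2)
          = fun p : ℕ × ℤ => (u ((p.1 - 1 : ℕ) : ℤ) p.2) ^ 2 := by
        funext p
        rcases p with ⟨j, k⟩
        match j with
        | 0 => simp [hbc]
        | (n + 1) =>
          have h1 : ((n + 1 : ℕ) : ℤ) + (-1) = ((n + 1 - 1 : ℕ) : ℤ) := by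
            push_cast; ring
          rw [h1]
      rw [heq]
      have h1 := (summable_prod_of_nonneg (f := fun p : ℕ × ℤ => (u (p.1 : ℤ) p.2) ^ 2)
        (fun p => sq_nonneg _)).mp hs
      refine (summable_prod_of_nonneg (fun p => sq_nonneg _)).mpr ⟨fun j => h1.1 (j - 1), ?_⟩
      have h2 : Summable fun j : ℕ =>
          (fun i : ℕ => ∑' k : ℤ, (u ((i - 1 : ℕ) : ℤ) k) ^ 2) (j + 1) := by
        simpa using h1.2
      exact (summable_nat_add_iff 1).mp h2
    · -- a = 0
      simpa using hs
    · -- a = 1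
      have h1 := summable_up hs
      refine h1.congr fun p => ?_
      have : ((p.1 + 1 : ℕ) : ℤ) = (p.1 : ℤ) + 1 := by push_cast; ring
      simp [this]
  have h2 := summable_shift2 key b
  exact h2

lemma sumprod (hbc : ∀ k : ℤ, u (-1) k = u 0 k)
    (hs : Summable fun p : ℕ × ℤ => (u (p.1 : ℤ) p.2) ^ 2)
    (a b c d : ℤ) (ha : -1 ≤ a) (ha' : a ≤ 1) (hc : -1 ≤ c) (hc' : c ≤ 1) :
    Summable fun p : ℕ × ℤ => u ((p.1 : ℤ) + a) (p.2 + b) * u ((p.1 : ℤ) + c) (p.2 + d) := by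
  have h1 := sumsq hbc hs a b ha ha'
  have h2 := sumsq hbc hs c d hc hc'
  have key : ∀ x y : ℝ, |x * y| ≤ 1/2 * (x ^ 2 + y ^ 2) := by
    intro x y
    rw [abs_mul]
    nlinarith [sq_nonneg (|x| - |y|), sq_abs x, sq_abs y, abs_nonneg x, abs_nonneg y]
  exact Summable.of_abs (Summable.of_nonneg_of_le (fun p => abs_nonneg _)
    (fun p => key _ _) ((h1.add h2).mul_left (1/2)))

lemma Psym (a b c d : ℤ) : PP u a b c d = PP u c d a b :=
  tsum_congr fun p => mul_comm _ _

lemma Pshift (a b c d m : ℤ) : PP u a (b + m) c (d + m) = PP u a b c d := by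
  rw [PP, PP, ← tsum_shift2
    (fun p : ℕ × ℤ => u ((p.1 : ℤ) + a) (p.2 + b) * u ((p.1 : ℤ) + c) (p.2 + d)) m]
  refine tsum_congr fun p => ?_
  show u ((p.1 : ℤ) + a) (p.2 + (b + m)) * u ((p.1 : ℤ) + c) (p.2 + (d + m))
      = u ((p.1 : ℤ) + a) (p.2 + m + b) * u ((p.1 : ℤ) + c) (p.2 + m + d)
  rw [show p.2 + (b + m) = p.2 + m + b by ring, show p.2 + (d + m) = p.2 + m + d by ring]

lemma Pdown (hbc : ∀ k : ℤ, u (-1) k = u 0 k)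
    (hs : Summable fun p : ℕ × ℤ => (u (p.1 : ℤ) p.2) ^ 2)
    (a b c d : ℤ) (ha : -1 ≤ a) (ha' : a ≤ 1) (hc : -1 ≤ c) (hc' : c ≤ 1) :
    PP u a b c d = RR u a c (d - b) + PP u (a + 1) b (c + 1) d := by
  rw [PP, tsum_split (sumprod hbc hs a b c d ha ha' hc hc')]
  congr 1
  · -- row part
    have h := Equiv.tsum_eq (Equiv.addRight b) (fun k : ℤ => u a k * u c (k + (d - b)))
    rw [RR, ← h]
    refine tsum_congr fun k => ?_
    show u (((0 : ℕ) : ℤ) + a) (k + b) * u (((0 : ℕ) : ℤ) + c) (k + d)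
        = u a (k + b) * u c (k + b + (d - b))
    rw [show k + b + (d - b) = k + d by ring]
    norm_num
  · rw [PP]
    refine tsum_congr fun p => ?_
    show u (((p.1 + 1 : ℕ) : ℤ) + a) (p.2 + b) * u (((p.1 + 1 : ℕ) : ℤ) + c) (p.2 + d)
        = u ((p.1 : ℤ) + (a + 1)) (p.2 + b) * u ((p.1 : ℤ) + (c + 1)) (p.2 + d)
    rw [show ((p.1 + 1 : ℕ) : ℤ) + a = (p.1 : ℤ) + (a + 1) by push_cast; ring,
        show ((p.1 + 1 : ℕ) : ℤ) + c = (p.1 : ℤ) + (c + 1) by push_cast; ring]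

lemma Rsym (a c e : ℤ) : RR u a c e = RR u c a (-e) := by
  rw [RR, RR, ← Equiv.tsum_eq (Equiv.addRight e) (fun k : ℤ => u c k * u a (k + -e))]
  refine tsum_congr fun k => ?_
  show u a k * u c (k + e) = u c (k + e) * u a (k + e + -e)
  rw [show k + e + -e = k by ring, mul_comm]

lemma RbcL (hbc : ∀ k : ℤ, u (-1) k = u 0 k) (c e : ℤ) : RR u (-1) c e = RR u 0 c e :=
  tsum_congr fun k => by rw [hbc]

lemma RbcR (hbc : ∀ k : ℤ, u (-1) k = u 0 k) (a e : ℤ) : RR u a (-1) e = RR u a 0 e :=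
  tsum_congr fun k => by rw [hbc]

end WithU

end LaxAux6

open LaxAux6

/-- Lemma 6: exact identity for the decomposition in the half-space. -/
theorem halfspace_lemma6 (α β : ℝ) (u : ℤ → ℤ → ℝ) (hu : memH u) :
    sqH (vop α β u) - 2 * ipH u (wop α β u) =
      -(α ^ 2 / 4) * sqH (L1 u) - (β ^ 2 / 4) * sqH (L2 u)
        - ((α ^ 2 + β ^ 2) / 4) * sqH (D1p (D2p u)) := by
  obtain ⟨hbc, hs⟩ := hu
  have hP : ∀ a b c d : ℤ, -1 ≤ a → a ≤ 1 → -1 ≤ c → c ≤ 1 →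
      HasSum (fun p : ℕ × ℤ => u ((p.1 : ℤ) + a) (p.2 + b) * u ((p.1 : ℤ) + c) (p.2 + d))
        (PP u a b c d) :=
    fun a b c d ha ha' hc hc' => (sumprod hbc hs a b c d ha ha' hc hc').hasSum
  have hV : sqH (vop α β u) = (α*α*(1/4)) * PP u (-1) 0 (-1) 0 + (α*β*(1/2)) * PP u (-1) 0 0 (-1) + (α*β*(-1/2)) * PP u (-1) 0 0 1 + (α*α*(-1/2)) * PP u (-1) 0 1 0 + (β*β*(1/4)) * PP u 0 (-1) 0 (-1) + (β*β*(-1/2)) * PP u 0 (-1) 0 1 + (α*β*(-1/2)) * PP u 0 (-1) 1 0 + (β*β*(1/4)) * PP u 0 1 0 1 + (α*β*(1/2)) * PP u 0 1 1 0 + (α*α*(1/4)) * PP u 1 0 1 0 := by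
    have hfun : (fun p : ℕ × ℤ => (vop α β u (p.1 : ℤ) p.2) ^ 2) = (fun p : ℕ × ℤ => (α*α*(1/4)) * (u ((p.1 : ℤ) + (-1)) (p.2 + 0) * u ((p.1 : ℤ) + (-1)) (p.2 + 0)) + (α*β*(1/2)) * (u ((p.1 : ℤ) + (-1)) (p.2 + 0) * u ((p.1 : ℤ) + 0) (p.2 + (-1))) + (α*β*(-1/2)) * (u ((p.1 : ℤ) + (-1)) (p.2 + 0) * u ((p.1 : ℤ) + 0) (p.2 + 1)) + (α*α*(-1/2)) * (u ((p.1 : ℤ) + (-1)) (p.2 + 0) * u ((p.1 : ℤ) + 1) (p.2 + 0)) + (β*β*(1/4)) * (u ((p.1 : ℤ) + 0) (p.2 + (-1)) * u ((p.1 : ℤ) + 0) (p.2 + (-1))) + (β*β*(-1/2)) * (u ((p.1 : ℤ) + 0) (p.2 + (-1)) * u ((p.1 : ℤ) + 0) (p.2 + 1)) + (α*β*(-1/2)) * (u ((p.1 : ℤ) + 0) (p.2 + (-1)) * u ((p.1 : ℤ) + 1) (p.2 + 0)) + (β*β*(1/4)) * (u ((p.1 : ℤ) + 0) (p.2 + 1)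 * u ((p.1 : ℤ) + 0) (p.2 + 1)) + (α*β*(1/2)) * (u ((p.1 : ℤ) + 0) (p.2 + 1) * u ((p.1 : ℤ) + 1) (p.2 + 0)) + (α*α*(1/4)) * (u ((p.1 : ℤ) + 1) (p.2 + 0) * u ((p.1 : ℤ) + 1) (p.2 + 0))) := by
      funext p
      simp only [vop, wop, D10, D20, D1p, D1m, D2p, D2m, L1, L2]
      ring_nf
    show (∑' p : ℕ × ℤ, (vop α β u (p.1 : ℤ) p.2) ^ 2) = _
    rw [hfun]
    exact (((((((((((hP (-1) 0 (-1) 0 (by norm_num) (by norm_num) (by norm_num) (by norm_num)).mul_left (α*α*(1/4))).add ((hP (-1) 0 0 (-1) (by norm_num) (by norm_num) (by norm_num) (by norm_num)).mul_left (α*β*(1/2)))).add ((hP (-1) 0 0 1 (by norm_num) (by norm_num) (by norm_num) (by norm_num)).mul_left (α*β*(-1/2)))).add ((hP (-1) 0 1 0 (by norm_num) (by norm_num) (by norm_num) (by norm_num)).mul_left (α*α*(-1/2)))).add ((hP 0 (-1) 0 (-1) (by norm_num) (by norm_num) (by norm_num) (by norm_num)).mul_left (β*β*(1/4)))).add ((hP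 0 (-1) 0 1 (by norm_num) (by norm_num) (by norm_num) (by norm_num)).mul_left (β*β*(-1/2)))).add ((hP 0 (-1) 1 0 (by norm_num) (by norm_num) (by norm_num) (by norm_num)).mul_left (α*β*(-1/2)))).add ((hP 0 1 0 1 (by norm_num) (by norm_num) (by norm_num) (by norm_num)).mul_left (β*β*(1/4)))).add ((hP 0 1 1 0 (by norm_num) (by norm_num) (by norm_num) (by norm_num)).mul_left (α*β*(1/2)))).add ((hP 1 0 1 0 (by norm_num) (by norm_num) (by norm_num) (by norm_num)).mul_left (α*α*(1/4)))).tsum_eq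
  have hW : ipH u (wop α β u) = (β*β*(1/8) + α*β*(-1/4) + α*α*(1/8)) * PP u (-1) (-1) 0 0 + (β*β*(-1/4) + α*α*(-3/4)) * PP u (-1) 0 0 0 + (β*β*(1/8) + α*β*(1/4) + α*α*(1/8)) * PP u (-1) 1 0 0 + (β*β*(-3/4) + α*α*(-1/4)) * PP u 0 (-1) 0 0 + (β*β*(3/2) + α*α*(3/2)) * PP u 0 0 0 0 + (β*β*(-3/4) + α*α*(-1/4)) * PP u 0 0 0 1 + (β*β*(1/8) + α*β*(1/4) + α*α*(1/8)) * PP u 0 0 1 (-1) + (β*β*(-1/4) + α*α*(-3/4)) * PP u 0 0 1 0 + (β*β*(1/8) + α*β*(-1/4) + α*α*(1/8)) * PP u 0 0 1 1 := by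
    have hfun : (fun p : ℕ × ℤ => u (p.1 : ℤ) p.2 * wop α β u (p.1 : ℤ) p.2) = (fun p : ℕ × ℤ => (β*β*(1/8) + α*β*(-1/4) + α*α*(1/8)) * (u ((p.1 : ℤ) + (-1)) (p.2 + (-1)) * u ((p.1 : ℤ) + 0) (p.2 + 0)) + (β*β*(-1/4) + α*α*(-3/4)) * (u ((p.1 : ℤ) + (-1)) (p.2 + 0) * u ((p.1 : ℤ) + 0) (p.2 + 0)) + (β*β*(1/8) + α*β*(1/4) + α*α*(1/8)) * (u ((p.1 : ℤ) + (-1)) (p.2 + 1) * u ((p.1 : ℤ) + 0) (p.2 + 0)) + (β*β*(-3/4) + α*α*(-1/4)) * (u ((p.1 : ℤ) + 0) (p.2 + (-1)) * u ((p.1 : ℤ) + 0) (p.2 + 0)) + (β*β*(3/2) + α*α*(3/2)) * (u ((p.1 : ℤ) + 0) (p.2 + 0) * u ((p.1 : ℤ) + 0) (p.2 + 0)) + (β*β*(-3/4) + α*α*(-1/4)) * (u ((p.1 : ℤ) + 0) (p.2 + 0) * u ((p.1 : ℤ) + 0) (p.2 + 1)) + (β*β*(1/8) + α*β*(1/4)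 + α*α*(1/8)) * (u ((p.1 : ℤ) + 0) (p.2 + 0) * u ((p.1 : ℤ) + 1) (p.2 + (-1))) + (β*β*(-1/4) + α*α*(-3/4)) * (u ((p.1 : ℤ) + 0) (p.2 + 0) * u ((p.1 : ℤ) + 1) (p.2 + 0)) + (β*β*(1/8) + α*β*(-1/4) + α*α*(1/8)) * (u ((p.1 : ℤ) + 0) (p.2 + 0) * u ((p.1 : ℤ) + 1) (p.2 + 1))) := by
      funext p
      simp only [vop, wop, D10, D20, D1p, D1m, D2p, D2m, L1, L2]
      ring_nf
    show (∑' p : ℕ × ℤ, u (p.1 : ℤ) p.2 * wop α β u (p.1 : ℤ) p.2) = _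
    rw [hfun]
    exact ((((((((((hP (-1) (-1) 0 0 (by norm_num) (by norm_num) (by norm_num) (by norm_num)).mul_left (β*β*(1/8) + α*β*(-1/4) + α*α*(1/8))).add ((hP (-1) 0 0 0 (by norm_num) (by norm_num) (by norm_num) (by norm_num)).mul_left (β*β*(-1/4) + α*α*(-3/4)))).add ((hP (-1) 1 0 0 (by norm_num) (by norm_num) (by norm_num) (by norm_num)).mul_left (β*β*(1/8) + α*β*(1/4) + α*α*(1/8)))).add ((hP 0 (-1) 0 0 (by norm_num) (by norm_num) (by norm_num) (by norm_num)).mul_left (β*β*(-3/4) + α*α*(-1/4)))).add ((hP 0 0 0 0 (by norm_num) (by norm_num) (by norm_num) (by norm_num)).mul_left (β*β*(3/2) + α*α*(3/2)))).add ((hP 0 0 0 1 (by norm_num) (by norm_num) (by norm_num) (by norm_num)).mul_left (β*β*(-3/4) + α*α*(-1/4)))).add ((hP 0 0 1 (-1) (by norm_num) (by norm_num) (by norm_num) (by norm_num)).mul_left (β*β*(1/8) + α*β*(1/4) + α*α*(1/8)))).add ((hP 0 0 1 0 (by norm_num) (by norm_num) (by norm_num) (by norm_num)).mul_left (β*β*(-1/4)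 + α*α*(-3/4)))).add ((hP 0 0 1 1 (by norm_num) (by norm_num) (by norm_num) (by norm_num)).mul_left (β*β*(1/8) + α*β*(-1/4) + α*α*(1/8)))).tsum_eq
  have hL1 : sqH (L1 u) = (1) * PP u (-1) 0 (-1) 0 + ((-4)) * PP u (-1) 0 0 0 + (2) * PP u (-1) 0 1 0 + (4) * PP u 0 0 0 0 + ((-4)) * PP u 0 0 1 0 + (1) * PP u 1 0 1 0 := by
    have hfun : (fun p : ℕ × ℤ => (L1 u (p.1 : ℤ) p.2) ^ 2) = (fun p : ℕ × ℤ => (1) * (u ((p.1 : ℤ) + (-1)) (p.2 + 0) * u ((p.1 : ℤ) + (-1)) (p.2 + 0)) + ((-4)) * (u ((p.1 : ℤ) + (-1)) (p.2 + 0) * u ((p.1 : ℤ) + 0) (p.2 + 0)) + (2) * (u ((p.1 : ℤ) + (-1)) (p.2 + 0) * u ((p.1 : ℤ) + 1) (p.2 + 0)) + (4) * (u ((p.1 : ℤ) + 0) (p.2 + 0) * u ((p.1 : ℤ) + 0) (p.2 + 0)) + ((-4)) * (u ((p.1 : ℤ) + 0) (p.2 + 0) * u ((p.1 : ℤ) +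 1) (p.2 + 0)) + (1) * (u ((p.1 : ℤ) + 1) (p.2 + 0) * u ((p.1 : ℤ) + 1) (p.2 + 0))) := by
      funext p
      simp only [vop, wop, D10, D20, D1p, D1m, D2p, D2m, L1, L2]
      ring_nf
    show (∑' p : ℕ × ℤ, (L1 u (p.1 : ℤ) p.2) ^ 2) = _
    rw [hfun]
    exact (((((((hP (-1) 0 (-1) 0 (by norm_num) (by norm_num) (by norm_num) (by norm_num)).mul_left (1)).add ((hP (-1) 0 0 0 (by norm_num) (by norm_num) (by norm_num) (by norm_num)).mul_left ((-4)))).add ((hP (-1) 0 1 0 (by norm_num) (by norm_num) (by norm_num) (by norm_num)).mul_left (2))).add ((hP 0 0 0 0 (by norm_num) (by norm_num) (by norm_num) (by norm_num)).mul_left (4))).add ((hP 0 0 1 0 (by norm_num) (by norm_num) (by norm_num) (by norm_num)).mul_left ((-4)))).add ((hP 1 0 1 0 (by norm_num) (by norm_num) (by norm_num) (by norm_num)).mul_left (1))).tsum_eq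
  have hL2 : sqH (L2 u) = (1) * PP u 0 (-1) 0 (-1) + ((-4)) * PP u 0 (-1) 0 0 + (2) * PP u 0 (-1) 0 1 + (4) * PP u 0 0 0 0 + ((-4)) * PP u 0 0 0 1 + (1) * PP u 0 1 0 1 := by
    have hfun : (fun p : ℕ × ℤ => (L2 u (p.1 : ℤ) p.2) ^ 2) = (fun p : ℕ × ℤ => (1) * (u ((p.1 : ℤ) + 0) (p.2 + (-1)) * u ((p.1 : ℤ) + 0) (p.2 + (-1))) + ((-4)) * (u ((p.1 : ℤ) + 0) (p.2 + (-1)) * u ((p.1 : ℤ) + 0) (p.2 + 0)) + (2) * (u ((p.1 : ℤ) + 0) (p.2 + (-1)) * u ((p.1 : ℤ) + 0) (p.2 + 1)) + (4) * (u ((p.1 : ℤ) + 0) (p.2 + 0) * u ((p.1 : ℤ) + 0) (p.2 + 0)) + ((-4)) * (u ((p.1 : ℤ) + 0) (p.2 + 0) * u ((p.1 : ℤ) + 0) (p.2 + 1)) + (1) * (u ((p.1 : ℤ) + 0) (p.2 + 1) * u ((p.1 : ℤ) + 0) (p.2 + 1))) := by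
      funext p
      simp only [vop, wop, D10, D20, D1p, D1m, D2p, D2m, L1, L2]
      ring_nf
    show (∑' p : ℕ × ℤ, (L2 u (p.1 : ℤ) p.2) ^ 2) = _
    rw [hfun]
    exact (((((((hP 0 (-1) 0 (-1) (by norm_num) (by norm_num) (by norm_num) (by norm_num)).mul_left (1)).add ((hP 0 (-1) 0 0 (by norm_num) (by norm_num) (by norm_num) (by norm_num)).mul_left ((-4)))).add ((hP 0 (-1) 0 1 (by norm_num) (by norm_num) (by norm_num) (by norm_num)).mul_left (2))).add ((hP 0 0 0 0 (by norm_num) (by norm_num) (by norm_num) (by norm_num)).mul_left (4))).add ((hP 0 0 0 1 (by norm_num) (by norm_num) (by norm_num) (by norm_num)).mul_left ((-4)))).add ((hP 0 1 0 1 (by norm_num) (by norm_num) (by norm_num) (by norm_num)).mul_left (1))).tsum_eq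
  have hDD : sqH (D1p (D2p u)) = (1) * PP u 0 0 0 0 + ((-2)) * PP u 0 0 0 1 + ((-2)) * PP u 0 0 1 0 + (2) * PP u 0 0 1 1 + (1) * PP u 0 1 0 1 + (2) * PP u 0 1 1 0 + ((-2)) * PP u 0 1 1 1 + (1) * PP u 1 0 1 0 + ((-2)) * PP u 1 0 1 1 + (1) * PP u 1 1 1 1 := by
    have hfun : (fun p : ℕ × ℤ => (D1p (D2p u) (p.1 : ℤ) p.2) ^ 2) = (fun p : ℕ × ℤ => (1) * (u ((p.1 : ℤ) + 0) (p.2 + 0) * u ((p.1 : ℤ) + 0) (p.2 + 0)) + ((-2)) * (u ((p.1 : ℤ) + 0) (p.2 + 0) * u ((p.1 : ℤ) + 0) (p.2 + 1)) + ((-2)) * (u ((p.1 : ℤ) + 0) (p.2 + 0) * u ((p.1 : ℤ) + 1) (p.2 + 0)) + (2) * (u ((p.1 : ℤ) + 0) (p.2 + 0) * u ((p.1 : ℤ) + 1) (p.2 + 1)) + (1) * (u ((p.1 : ℤ) + 0) (p.2 + 1) * u ((p.1 : ℤ) + 0) (p.2 + 1)) + (2) * (u ((p.1 : ℤ) + 0)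 (p.2 + 1) * u ((p.1 : ℤ) + 1) (p.2 + 0)) + ((-2)) * (u ((p.1 : ℤ) + 0) (p.2 + 1) * u ((p.1 : ℤ) + 1) (p.2 + 1)) + (1) * (u ((p.1 : ℤ) + 1) (p.2 + 0) * u ((p.1 : ℤ) + 1) (p.2 + 0)) + ((-2)) * (u ((p.1 : ℤ) + 1) (p.2 + 0) * u ((p.1 : ℤ) + 1) (p.2 + 1)) + (1) * (u ((p.1 : ℤ) + 1) (p.2 + 1) * u ((p.1 : ℤ) + 1) (p.2 + 1))) := by
      funext p
      simp only [vop, wop, D10, D20, D1p, D1m, D2p, D2m, L1, L2]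
      ring_nf
    show (∑' p : ℕ × ℤ, (D1p (D2p u) (p.1 : ℤ) p.2) ^ 2) = _
    rw [hfun]
    exact (((((((((((hP 0 0 0 0 (by norm_num) (by norm_num) (by norm_num) (by norm_num)).mul_left (1)).add ((hP 0 0 0 1 (by norm_num) (by norm_num) (by norm_num) (by norm_num)).mul_left ((-2)))).add ((hP 0 0 1 0 (by norm_num) (by norm_num) (by norm_num) (by norm_num)).mul_left ((-2)))).add ((hP 0 0 1 1 (by norm_num) (by norm_num) (by norm_num) (by norm_num)).mul_left (2))).add ((hP 0 1 0 1 (by norm_num) (by norm_num) (by norm_num) (by norm_num)).mul_left (1))).add ((hP 0 1 1 0 (by norm_num) (by norm_num) (by norm_num) (by norm_num)).mul_left (2))).add ((hP 0 1 1 1 (by norm_num) (by norm_num) (by norm_num) (by norm_num)).mul_left ((-2)))).add ((hP 1 0 1 0 (by norm_num) (by norm_num) (by norm_num) (by norm_num)).mul_left (1))).add ((hP 1 0 1 1 (by norm_num) (by norm_num) (by norm_num) (by norm_num)).mul_left ((-2)))).add ((hP 1 1 1 1 (by norm_num) (by norm_num) (by norm_num) (by norm_num)).mul_left (1))).tsu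m_eq
  -- reduction equations
  have r8 : PP u 0 (-1) 0 (-1) = PP u 0 0 0 0 := by
    have h := Pshift (u := u) 0 0 0 0 (-1); norm_num at h; exact h
  have r9 : PP u 0 (-1) 0 0 = PP u 0 0 0 1 := by
    have h := Pshift (u := u) 0 0 0 1 (-1); norm_num at h; exact h
  have r10 : PP u 0 (-1) 0 1 = PP u 0 0 0 2 := by
    have h := Pshift (u := u) 0 0 0 2 (-1); norm_num at h; exact h
  have r11 : PP u 0 (-1) 1 0 = PP u 0 0 1 1 := by
    have h := Pshift (u := u) 0 0 1 1 (-1); norm_num at h; exact h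
  have r17 : PP u 0 1 0 1 = PP u 0 0 0 0 := by
    have h := Pshift (u := u) 0 0 0 0 1; norm_num at h; exact h
  have r18 : PP u 0 1 1 0 = PP u 0 0 1 (-1) := by
    have h := Pshift (u := u) 0 0 1 (-1) 1; norm_num at h; exact h
  have r19 : PP u 0 1 1 1 = PP u 0 0 1 0 := by
    have h := Pshift (u := u) 0 0 1 0 1; norm_num at h; exact h
  have r20 : PP u 1 0 1 0 = PP u 0 0 0 0 - RR u 0 0 0 := by
    have h := Pdown hbc hs 0 0 0 0 (by norm_num) (by norm_num) (by norm_num) (by norm_num)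
    norm_num at h; linarith
  have r21 : PP u 1 0 1 1 = PP u 0 0 0 1 - RR u 0 0 1 := by
    have h := Pdown hbc hs 0 0 0 1 (by norm_num) (by norm_num) (by norm_num) (by norm_num)
    norm_num at h; linarith
  have r22 : PP u 1 1 1 1 = PP u 0 0 0 0 - RR u 0 0 0 := by
    have h := Pshift (u := u) 1 0 1 0 1; norm_num at h; rw [h, r20]
  have r2 : PP u (-1) 0 (-1) 0 = RR u 0 0 0 + PP u 0 0 0 0 := by
    have h := Pdown hbc hs (-1) 0 (-1) 0 (by norm_num) (by norm_num) (by norm_num) (by norm_num)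
    norm_num at h
    rw [h, RbcL hbc, RbcR hbc]
  have r3 : PP u (-1) 0 0 (-1) = RR u 0 0 1 + PP u 0 0 1 (-1) := by
    have h := Pdown hbc hs (-1) 0 0 (-1) (by norm_num) (by norm_num) (by norm_num) (by norm_num)
    norm_num at h
    have h2 := Rsym (u := u) 0 0 (-1); norm_num at h2
    rw [h, RbcL hbc, h2]
  have r4 : PP u (-1) 0 0 0 = RR u 0 0 0 + PP u 0 0 1 0 := by
    have h := Pdown hbc hs (-1) 0 0 0 (by norm_num) (by norm_num) (by norm_num) (by norm_num)
    norm_num at h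
    rw [h, RbcL hbc]
  have r5 : PP u (-1) 0 0 1 = RR u 0 0 1 + PP u 0 0 1 1 := by
    have h := Pdown hbc hs (-1) 0 0 1 (by norm_num) (by norm_num) (by norm_num) (by norm_num)
    norm_num at h
    rw [h, RbcL hbc]
  have r6 : PP u (-1) 0 1 0 = RR u 0 1 0 + PP u 0 0 2 0 := by
    have h := Pdown hbc hs (-1) 0 1 0 (by norm_num) (by norm_num) (by norm_num) (by norm_num)
    norm_num at h
    rw [h, RbcL hbc]
  have r1 : PP u (-1) (-1) 0 0 = RR u 0 0 1 + PP u 0 0 1 1 := by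
    have h := Pshift (u := u) (-1) 0 0 1 (-1); norm_num at h; rw [h, r5]
  have r7 : PP u (-1) 1 0 0 = RR u 0 0 1 + PP u 0 0 1 (-1) := by
    have h := Pshift (u := u) (-1) 0 0 (-1) 1; norm_num at h; rw [h, r3]
  rw [hV, hW, hL1, hL2, hDD, r1, r2, r3, r4, r5, r6, r7, r8, r9, r10, r11,
    r17, r18, r19, r20, r21, r22]
  ring
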